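/- Let D = D_α be the diagonal operator on E_ω associated with a bounded sequence α : ℕ → K. Assume that every value μ of the sequence α that is attained only finitely often (i.e. { i : α_i = μ } is nonempty and finite) is isolated from the other diagonal entries (there exists ε > 0 with ‖μ − α_i‖ ≥ ε for every i with α_i ≠ μ). Then the essential spectrum of D decomposes as σ_e(D) = σ'_e(D) ∪ σ''_e(D), where σ'_e(D) is the proper essential spectrum and σ''_e(D) is the improper essential spectrum of D. -/

import Mathlib

open Filter Topology

/-- The non-Archimedean Hilbert space `E_ω`: the space of sequences `u : ℕ → K`
such that `‖u i‖ * ‖ω i‖^(1/2) → 0`, as a submodule of `ℕ → K`. -/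
def Eomega (K : Type*) [NontriviallyNormedField K] (ω : ℕ → K) : Submodule K (ℕ → K) where
  carrier := {u | Tendsto (fun i => ‖u i‖ * Real.sqrt ‖ω i‖) atTop (𝓝 0)}
  zero_mem' := by simpa using (tendsto_const_nhds : Tendsto (fun _ : ℕ => (0:ℝ)) atTop (𝓝 0))
  add_mem' := by
    intro u v hu hv
    have h := hu.add hv
    rw [add_zero] at h
    refine squeeze_zero (fun i => by positivity) (fun i => ?_) h
    calc ‖(u + v) i‖ * Real.sqrt ‖ω i‖
        ≤ (‖u i‖ + ‖v i‖) * Real.sqrt ‖ω i‖ := by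
          have : ‖(u + v) i‖ ≤ ‖u i‖ + ‖v i‖ := by
            simpa [Pi.add_apply] using norm_add_le (u i) (v i)
          exact mul_le_mul_of_nonneg_right this (Real.sqrt_nonneg _)
      _ = ‖u i‖ * Real.sqrt ‖ω i‖ + ‖v i‖ * Real.sqrt ‖ω i‖ := by ring
  smul_mem' := by
    intro c u hu
    have h := hu.const_mul ‖c‖
    rw [mul_zero] at h
    refine squeeze_zero (fun i => by positivity) (fun i => le_of_eq ?_) h
    simp [Pi.smul_apply, norm_smul, mul_assoc]

lemma Eomega.bddAbove {K : Type*} [NontriviallyNormedField K] {ω : ℕ → K}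
    (u : Eomega K ω) :
    BddAbove (Set.range fun i => ‖(u : ℕ → K) i‖ * Real.sqrt ‖ω i‖) :=
  u.2.bddAbove_range

/-- The sup-norm on `E_ω`: `‖u‖ = sup_i ‖u i‖ * ‖ω i‖^(1/2)`. -/
noncomputable instance Eomega.instSeminormedAddCommGroup
    {K : Type*} [NontriviallyNormedField K] {ω : ℕ → K} :
    SeminormedAddCommGroup (Eomega K ω) :=
  AddGroupSeminorm.toSeminormedAddCommGroup
    { toFun := fun u => ⨆ i, ‖(u : ℕ → K) i‖ * Real.sqrt ‖ω i‖
      map_zero' := by simp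
      add_le' := by
        intro u v
        refine ciSup_le fun i => ?_
        calc ‖((u + v : Eomega K ω) : ℕ → K) i‖ * Real.sqrt ‖ω i‖
            ≤ ‖(u : ℕ → K) i‖ * Real.sqrt ‖ω i‖ + ‖(v : ℕ → K) i‖ * Real.sqrt ‖ω i‖ := by
              have : ‖((u + v : Eomega K ω) : ℕ → K) i‖ ≤ ‖(u : ℕ → K) i‖ + ‖(v : ℕ → K) i‖ := by
                simpa using norm_add_le ((u : ℕ → K) i) ((v : ℕ → K) i)
              nlinarith [Real.sqrt_nonneg ‖ω i‖, norm_nonneg ((u : ℕ → K) i),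
                norm_nonneg ((v : ℕ → K) i)]
          _ ≤ _ := add_le_add (le_ciSup (Eomega.bddAbove u) i) (le_ciSup (Eomega.bddAbove v) i)
      neg' := by intro u; simp }


/-- Shortcut instance making sure that the topology of `E_ω` used below is the
norm topology (and not the topology induced by the product topology on
`ℕ → K`). -/
noncomputable instance (priority := 5000) Eomega.instTopologicalSpace
    {K : Type*} [NontriviallyNormedField K] {ω : ℕ → K} :
    TopologicalSpace (Eomega K ω) :=
  Eomega.instSeminormedAddCommGroup.toUniformSpace.toTopologicalSpace

/-- The diagonal operator `D = D_α` on `E_ω` associated with a bounded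
sequence `α : ℕ → K`, given by `(D u) i = α i * u i`. -/
def diagOp {K : Type*} [NontriviallyNormedField K] (ω : ℕ → K) (α : ℕ → K)
    (hα : ∃ C, ∀ i, ‖α i‖ ≤ C) : Eomega K ω →ₗ[K] Eomega K ω where
  toFun u := ⟨fun i => α i * (u : ℕ → K) i, by
    obtain ⟨C, hC⟩ := hα
    have h := u.2.const_mul C
    rw [mul_zero] at h
    refine squeeze_zero (fun i => by positivity) (fun i => ?_) h
    calc ‖α i * (u : ℕ → K) i‖ * Real.sqrt ‖ω i‖
        = ‖α i‖ * (‖(u : ℕ → K) i‖ * Real.sqrt ‖ω i‖) := by rw [norm_mul]; ring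
      _ ≤ C * (‖(u : ℕ → K) i‖ * Real.sqrt ‖ω i‖) :=
          mul_le_mul_of_nonneg_right (hC i) (by positivity)⟩
  map_add' u v := by
    apply Subtype.ext
    funext i
    simp [mul_add]
  map_smul' c u := by
    apply Subtype.ext
    funext i
    simp [Pi.smul_apply, smul_eq_mul]
    ring

/-- `T` is a Fredholm operator of index 0: its kernel is finite-dimensional,
its range is closed, and the quotient by the range is finite-dimensional of the
same dimension as the kernel. -/
def IsFredholm0 {K : Type*} [NontriviallyNormedField K] {ω : ℕ → K}
    (T : Eomega K ω →ₗ[K] Eomega K ω) : Prop :=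
  FiniteDimensional K (LinearMap.ker T) ∧
  IsClosed (LinearMap.range T : Set (Eomega K ω)) ∧
  FiniteDimensional K (Eomega K ω ⧸ LinearMap.range T) ∧
  Module.finrank K (LinearMap.ker T) =
    Module.finrank K (Eomega K ω ⧸ LinearMap.range T)

/-- The spectrum of `D`: those `μ` such that `μ·I − D` has no bounded (i.e.
continuous) two-sided inverse. -/
def specSet {K : Type*} [NontriviallyNormedField K] {ω : ℕ → K}
    (D : Eomega K ω →ₗ[K] Eomega K ω) : Set K :=
  {μ | ¬ ∃ S : Eomega K ω →ₗ[K] Eomega K ω, Continuous S ∧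
        S ∘ₗ (μ • LinearMap.id - D) = LinearMap.id ∧
        (μ • LinearMap.id - D) ∘ₗ S = LinearMap.id}

/-- The essential spectrum of `D`: those `μ` such that `μ·I − D` is not a
Fredholm operator of index 0. -/
def essSpec {K : Type*} [NontriviallyNormedField K] {ω : ℕ → K}
    (D : Eomega K ω →ₗ[K] Eomega K ω) : Set K :=
  {μ | ¬ IsFredholm0 (μ • LinearMap.id - D)}

/-- The proper essential spectrum of `D`: those `μ` in the spectrum such that
`μ·I − D` is injective but not surjective. -/
def properEssSpec {K : Type*} [NontriviallyNormedField K] {ω : ℕ → K}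
    (D : Eomega K ω →ₗ[K] Eomega K ω) : Set K :=
  {μ | μ ∈ specSet D ∧
       Function.Injective
         ⇑(μ • (LinearMap.id : Eomega K ω →ₗ[K] Eomega K ω) - D) ∧
       ¬ Function.Surjective
         ⇑(μ • (LinearMap.id : Eomega K ω →ₗ[K] Eomega K ω) - D)}

/-- The improper essential spectrum of `D`: those `μ` such that `N(μI − D)` is
infinite-dimensional. -/
def improperEssSpec {K : Type*} [NontriviallyNormedField K] {ω : ℕ → K}
    (D : Eomega K ω →ₗ[K] Eomega K ω) : Set K :=
  {μ | ¬ FiniteDimensional K (LinearMap.ker (μ • LinearMap.id - D))}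

set_option synthInstance.maxHeartbeats 1000000
set_option maxHeartbeats 2000000
section Aux
variable {K : Type*} [NontriviallyNormedField K] {ω : ℕ → K}

lemma Eomega.norm_def (u : Eomega K ω) :
    ‖u‖ = ⨆ i, ‖(u : ℕ → K) i‖ * Real.sqrt ‖ω i‖ := rfl

lemma Eomega.apply_le_norm (u : Eomega K ω) (i : ℕ) :
    ‖(u : ℕ → K) i‖ * Real.sqrt ‖ω i‖ ≤ ‖u‖ :=
  le_ciSup (Eomega.bddAbove u) i

lemma Eomega.norm_le' (u : Eomega K ω) {B : ℝ}
    (h : ∀ i, ‖(u : ℕ → K) i‖ * Real.sqrt ‖ω i‖ ≤ B) : ‖u‖ ≤ B := ciSup_le h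

lemma LinearMap.continuous_of_bound' {E F : Type*} [SeminormedAddCommGroup E]
    [SeminormedAddCommGroup F] [Module K E] [Module K F]
    (f : E →ₗ[K] F) (C : ℝ) (hC : 0 ≤ C) (h : ∀ x, ‖f x‖ ≤ C * ‖x‖) :
    Continuous f := by
  have : LipschitzWith C.toNNReal f := by
    refine LipschitzWith.of_dist_le_mul fun x y => ?_
    rw [dist_eq_norm, dist_eq_norm, ← map_sub]
    simpa [Real.coe_toNNReal _ hC] using h (x - y)
  exact this.continuous

lemma Tapply (α : ℕ → K) (hα : ∃ C, ∀ i, ‖α i‖ ≤ C) (μ : K) (u : Eomega K ω) (i : ℕ) :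
    (((μ • (LinearMap.id : Eomega K ω →ₗ[K] Eomega K ω) - diagOp ω α hα) u : Eomega K ω) : ℕ → K) i
      = (μ - α i) * (u : ℕ → K) i := by
  simp [diagOp, sub_mul, LinearMap.sub_apply, LinearMap.smul_apply, smul_eq_mul]

end Aux
section Aux2
variable {K : Type*} [NontriviallyNormedField K] {ω : ℕ → K}

lemma Eomega.mem_iff {u : ℕ → K} :
    u ∈ Eomega K ω ↔ Filter.Tendsto (fun i => ‖u i‖ * Real.sqrt ‖ω i‖) atTop (𝓝 0) :=
  Iff.rfl

/-- A function supported on a finite set lies in `E_ω`. -/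
lemma Eomega.mem_of_finsupp (s : Finset ℕ) (f : ℕ → K)
    (hf : ∀ i ∉ s, f i = 0) : f ∈ Eomega K ω := by
  rw [Eomega.mem_iff]
  refine Tendsto.congr' ?_ (tendsto_const_nhds : Tendsto (fun _ : ℕ => (0:ℝ)) atTop (𝓝 0))
  filter_upwards [eventually_ge_atTop ((s.sup id) + 1)] with i hi
  have hns : i ∉ s := fun h => by
    have := Finset.le_sup (f := id) h
    simp only [id] at this
    omega
  simp [hf i hns]

/-- Coordinatewise evaluation as a linear map `E_ω →ₗ K`. -/
def Eomega.evalLM (ω : ℕ → K) (j : ℕ) : Eomega K ω →ₗ[K] K :=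
  (LinearMap.proj j) ∘ₗ (Eomega K ω).subtype

@[simp] lemma Eomega.evalLM_apply (j : ℕ) (u : Eomega K ω) :
    Eomega.evalLM ω j u = (u : ℕ → K) j := rfl

lemma Eomega.continuous_evalLM (hω : ∀ i, ω i ≠ 0) (j : ℕ) :
    Continuous (Eomega.evalLM ω j) := by
  have hpos : 0 < Real.sqrt ‖ω j‖ := Real.sqrt_pos.2 (norm_pos_iff.2 (hω j))
  refine LinearMap.continuous_of_bound' _ (Real.sqrt ‖ω j‖)⁻¹ (by positivity) fun u => ?_
  rw [Eomega.evalLM_apply]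
  have h1 := Eomega.apply_le_norm u j
  have h2 : ‖(u : ℕ → K) j‖ ≤ ‖u‖ / Real.sqrt ‖ω j‖ := (le_div_iff₀ hpos).2 h1
  simpa [div_eq_inv_mul] using h2

end Aux2
section Aux3
variable {K : Type*} [NontriviallyNormedField K] {ω : ℕ → K}

lemma surj_of_fredholm0_inj (T : Eomega K ω →ₗ[K] Eomega K ω)
    (hF : IsFredholm0 T) (hinj : Function.Injective T) : Function.Surjective T := by
  obtain ⟨hker, hcl, hq, heq⟩ := hF
  have hkb : LinearMap.ker T = ⊥ := LinearMap.ker_eq_bot.2 hinj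
  have h0 : Module.finrank K (LinearMap.ker T) = 0 := by
    rw [hkb]; exact finrank_bot K _
  rw [h0] at heq
  have : Subsingleton (Eomega K ω ⧸ LinearMap.range T) := by
    have := heq.symm
    exact Module.finrank_zero_iff.1 this
  have hr : LinearMap.range T = ⊤ := by
    rwa [← Submodule.Quotient.subsingleton_iff]
  exact LinearMap.range_eq_top.1 hr

end Aux3
section Aux4
variable {K : Type*} [NontriviallyNormedField K] {ω : ℕ → K}

/-- The "standard basis vector" `e_j · c` in `E_ω`. -/
def Eomega.sgl (ω : ℕ → K) (j : ℕ) (c : K) : Eomega K ω :=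
  ⟨fun i => if i = j then c else 0,
    Eomega.mem_of_finsupp {j} _ (fun i hi => by
      simp only [Finset.mem_singleton] at hi; simp [hi])⟩

@[simp] lemma Eomega.sgl_apply (j : ℕ) (c : K) (i : ℕ) :
    ((Eomega.sgl ω j c : Eomega K ω) : ℕ → K) i = if i = j then c else 0 := rfl

lemma sgl_mem_ker (α : ℕ → K) (hα : ∃ C, ∀ i, ‖α i‖ ≤ C) (μ : K) (j : ℕ)
    (hj : α j = μ) (c : K) :
    Eomega.sgl ω j c ∈ LinearMap.ker
      (μ • (LinearMap.id : Eomega K ω →ₗ[K] Eomega K ω) - diagOp ω α hα) := by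
  rw [LinearMap.mem_ker]
  apply Subtype.ext
  funext i
  rw [Tapply]
  by_cases hij : i = j
  · subst hij; simp [hj]
  · simp [hij]

lemma caseA_ker_infinite (α : ℕ → K) (hα : ∃ C, ∀ i, ‖α i‖ ≤ C) (μ : K)
    (hinf : {i : ℕ | α i = μ}.Infinite) :
    ¬ FiniteDimensional K (LinearMap.ker
      (μ • (LinearMap.id : Eomega K ω →ₗ[K] Eomega K ω) - diagOp ω α hα)) := by
  intro hFD
  set T := μ • (LinearMap.id : Eomega K ω →ₗ[K] Eomega K ω) - diagOp ω α hα with hT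
  set S : Set ℕ := {i : ℕ | α i = μ} with hS
  let f : S → LinearMap.ker T := fun j =>
    ⟨Eomega.sgl ω j.val 1, sgl_mem_ker α hα μ j.val j.2 1⟩
  have hli : LinearIndependent K f := by
    rw [linearIndependent_iff']
    intro s g hsum i hi
    have := congrArg (fun u : LinearMap.ker T =>
      Eomega.evalLM ω i.val ((LinearMap.ker T).subtype u)) hsum
    simp only [map_sum, map_smul] at this
    have h0 : (∑ j ∈ s, if (i : ℕ) = (j : ℕ) then g j else 0) = 0 := by
      simpa [f] using this
    have h1 : ∀ j ∈ s, (if (i : ℕ) = (j : ℕ) then g j else 0)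
        = if j = i then g j else 0 := by
      intro j _
      by_cases hji : j = i
      · subst hji; simp
      · have : (i : ℕ) ≠ (j : ℕ) := fun h => hji (Subtype.ext h.symm)
        simp [this, hji]
    rw [Finset.sum_congr rfl h1, Finset.sum_ite_eq' s i g] at h0
    simpa [hi] using h0
  haveI : IsNoetherian K (LinearMap.ker T) := IsNoetherian.iff_fg.2 hFD
  have : Finite S := hli.finite_of_isNoetherian
  exact hinf (Set.toFinite S)
end Aux4
section Aux5
variable {K : Type*} [NontriviallyNormedField K] {ω : ℕ → K}

/-- If the diagonal entries `μ - α i` are bounded below, the diagonal operator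
with entries `(μ - α i)⁻¹` is a bounded two-sided inverse of `μ I - D`. -/
lemma caseC_inverse (α : ℕ → K) (hα : ∃ C, ∀ i, ‖α i‖ ≤ C) (μ : K)
    {δ : ℝ} (hδ : 0 < δ) (hbdd : ∀ i, δ ≤ ‖μ - α i‖) :
    ∃ S : Eomega K ω →ₗ[K] Eomega K ω, Continuous S ∧
      S ∘ₗ (μ • LinearMap.id - diagOp ω α hα) = LinearMap.id ∧
      (μ • LinearMap.id - diagOp ω α hα) ∘ₗ S = LinearMap.id := by
  have hne : ∀ i, μ - α i ≠ 0 := fun i h => by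
    have := hbdd i; rw [h, norm_zero] at this; linarith
  have hmem : ∀ v : Eomega K ω,
      (fun i => (μ - α i)⁻¹ * (v : ℕ → K) i) ∈ Eomega K ω := by
    intro v
    rw [Eomega.mem_iff]
    have h := v.2.const_mul δ⁻¹
    rw [mul_zero] at h
    refine squeeze_zero (fun i => by positivity) (fun i => ?_) h
    have hb : ‖(μ - α i)⁻¹‖ ≤ δ⁻¹ := by
      rw [norm_inv]
      exact inv_anti₀ hδ (hbdd i)
    calc ‖(μ - α i)⁻¹ * (v : ℕ → K) i‖ * Real.sqrt ‖ω i‖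
        = ‖(μ - α i)⁻¹‖ * (‖(v : ℕ → K) i‖ * Real.sqrt ‖ω i‖) := by
          rw [norm_mul]; ring
      _ ≤ δ⁻¹ * (‖(v : ℕ → K) i‖ * Real.sqrt ‖ω i‖) :=
          mul_le_mul_of_nonneg_right hb (by positivity)
  refine ⟨{ toFun := fun v => ⟨fun i => (μ - α i)⁻¹ * (v : ℕ → K) i, hmem v⟩
            map_add' := fun u v => by apply Subtype.ext; funext i; simp [mul_add]
            map_smul' := fun c v => by
              apply Subtype.ext; funext i
              simp [Pi.smul_apply, smul_eq_mul]; ring }, ?_, ?_, ?_⟩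
  · refine LinearMap.continuous_of_bound' _ δ⁻¹ (by positivity) fun v => ?_
    refine Eomega.norm_le' _ fun i => ?_
    calc ‖(μ - α i)⁻¹ * (v : ℕ → K) i‖ * Real.sqrt ‖ω i‖
        = ‖(μ - α i)⁻¹‖ * (‖(v : ℕ → K) i‖ * Real.sqrt ‖ω i‖) := by
          rw [norm_mul]; ring
      _ ≤ δ⁻¹ * ‖v‖ := by
          refine mul_le_mul ?_ (Eomega.apply_le_norm v i) (by positivity) (by positivity)
          rw [norm_inv]
          exact inv_anti₀ hδ (hbdd i)
  · apply LinearMap.ext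
    intro u
    apply Subtype.ext
    funext i
    simp only [LinearMap.comp_apply, LinearMap.id_apply, LinearMap.coe_mk, AddHom.coe_mk]
    rw [Tapply]
    exact inv_mul_cancel_left₀ (hne i) _
  · apply LinearMap.ext
    intro u
    apply Subtype.ext
    funext i
    rw [LinearMap.comp_apply, Tapply]
    simp only [LinearMap.id_apply, LinearMap.coe_mk, AddHom.coe_mk]
    exact mul_inv_cancel_left₀ (hne i) _

end Aux5
section Aux6
variable {K : Type*} [NontriviallyNormedField K] {ω : ℕ → K}

lemma fredholm0_of_bijective (T : Eomega K ω →ₗ[K] Eomega K ω)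
    (hinj : Function.Injective T) (hsurj : Function.Surjective T) :
    IsFredholm0 T := by
  have hker : LinearMap.ker T = ⊥ := LinearMap.ker_eq_bot.2 hinj
  have hr : LinearMap.range T = ⊤ := LinearMap.range_eq_top.2 hsurj
  haveI : Subsingleton (Eomega K ω ⧸ LinearMap.range T) :=
    Submodule.Quotient.subsingleton_iff.2 hr
  refine ⟨by rw [hker]; infer_instance, ?_, inferInstance, ?_⟩
  · rw [hr]
    simpa [Submodule.top_coe] using isClosed_univ
  · rw [hker, finrank_bot, eq_comm]
    exact Module.finrank_zero_of_subsingleton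

end Aux6
section Aux7
variable {K : Type*} [NontriviallyNormedField K] {ω : ℕ → K}

/-- A sequence of indices along which `‖μ - α i‖` is small and strictly decreasing. -/
noncomputable def chooseSeq (α : ℕ → K) (μ : K)
    (hsmall : ∀ δ : ℝ, 0 < δ → ∃ i, ‖μ - α i‖ < δ)
    (hpos : ∀ i, 0 < ‖μ - α i‖) : ℕ → ℕ
  | 0 => (hsmall 1 one_pos).choose
  | (k+1) => (hsmall (min ‖μ - α (chooseSeq α μ hsmall hpos k)‖ (1/(k+2)))
      (lt_min (hpos _) (by positivity))).choose

lemma chooseSeq_zero (α : ℕ → K) (μ : K)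
    (hsmall : ∀ δ : ℝ, 0 < δ → ∃ i, ‖μ - α i‖ < δ)
    (hpos : ∀ i, 0 < ‖μ - α i‖) :
    ‖μ - α (chooseSeq α μ hsmall hpos 0)‖ < 1 := by
  rw [chooseSeq]
  exact (hsmall 1 one_pos).choose_spec

lemma chooseSeq_succ (α : ℕ → K) (μ : K)
    (hsmall : ∀ δ : ℝ, 0 < δ → ∃ i, ‖μ - α i‖ < δ)
    (hpos : ∀ i, 0 < ‖μ - α i‖) (k : ℕ) :
    ‖μ - α (chooseSeq α μ hsmall hpos (k+1))‖
      < min ‖μ - α (chooseSeq α μ hsmall hpos k)‖ (1/(k+2)) := by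
  exact (hsmall (min ‖μ - α (chooseSeq α μ hsmall hpos k)‖ (1/((k:ℝ)+2)))
    (lt_min (hpos _) (by positivity))).choose_spec

lemma chooseSeq_lt (α : ℕ → K) (μ : K)
    (hsmall : ∀ δ : ℝ, 0 < δ → ∃ i, ‖μ - α i‖ < δ)
    (hpos : ∀ i, 0 < ‖μ - α i‖) (k : ℕ) :
    ‖μ - α (chooseSeq α μ hsmall hpos k)‖ < 1/((k:ℝ)+1) := by
  cases k with
  | zero => simpa using chooseSeq_zero α μ hsmall hpos
  | succ k =>
      have := (chooseSeq_succ α μ hsmall hpos k).trans_le (min_le_right _ _)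
      have hcast : (1:ℝ)/((k:ℝ)+2) = 1/(((k+1:ℕ):ℝ)+1) := by push_cast; ring
      rwa [hcast] at this

lemma chooseSeq_injective (α : ℕ → K) (μ : K)
    (hsmall : ∀ δ : ℝ, 0 < δ → ∃ i, ‖μ - α i‖ < δ)
    (hpos : ∀ i, 0 < ‖μ - α i‖) :
    Function.Injective (chooseSeq α μ hsmall hpos) := by
  have hanti : StrictAnti (fun k => ‖μ - α (chooseSeq α μ hsmall hpos k)‖) :=
    strictAnti_nat_of_succ_lt fun k =>
      (chooseSeq_succ α μ hsmall hpos k).trans_le (min_le_left _ _)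
  intro a b hab
  exact hanti.injective (by rw [hab])

end Aux7
section Aux8
variable {K : Type*} [NontriviallyNormedField K] {ω : ℕ → K}

lemma caseD_not_surjective (hω : ∀ i, ω i ≠ 0) (α : ℕ → K)
    (hα : ∃ C, ∀ i, ‖α i‖ ≤ C) (μ : K)
    (hempty : ∀ i : ℕ, α i ≠ μ)
    (hsmall : ∀ δ : ℝ, 0 < δ → ∃ i, ‖μ - α i‖ < δ) :
    ¬ Function.Surjective
      ⇑(μ • (LinearMap.id : Eomega K ω →ₗ[K] Eomega K ω) - diagOp ω α hα) := by
  classical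
  intro hsurj
  have hpos : ∀ i, 0 < ‖μ - α i‖ := fun i =>
    norm_pos_iff.2 (sub_ne_zero.2 (hempty i).symm)
  obtain ⟨c, hc⟩ := NormedField.exists_one_lt_norm K
  have hcpos : (0:ℝ) < ‖c‖ := lt_trans zero_lt_one hc
  -- weights w i with 1 ≤ ‖w i‖√‖ω i‖ ≤ ‖c‖
  have hwex : ∀ i : ℕ, ∃ w : K,
      1 ≤ ‖w‖ * Real.sqrt ‖ω i‖ ∧ ‖w‖ * Real.sqrt ‖ω i‖ ≤ ‖c‖ := by
    intro i
    have hp : 0 < Real.sqrt ‖ω i‖ := Real.sqrt_pos.2 (norm_pos_iff.2 (hω i))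
    obtain ⟨n, hn1, hn2⟩ := exists_mem_Ico_zpow (inv_pos.2 hp) hc
    refine ⟨c ^ (n+1), ?_, ?_⟩
    · rw [norm_zpow]
      calc (1:ℝ) = (Real.sqrt ‖ω i‖)⁻¹ * Real.sqrt ‖ω i‖ :=
            (inv_mul_cancel₀ (ne_of_gt hp)).symm
        _ ≤ ‖c‖ ^ (n+1) * Real.sqrt ‖ω i‖ :=
            mul_le_mul_of_nonneg_right hn2.le hp.le
    · rw [norm_zpow, zpow_add_one₀ (ne_of_gt hcpos)]
      calc ‖c‖ ^ n * ‖c‖ * Real.sqrt ‖ω i‖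
          ≤ (Real.sqrt ‖ω i‖)⁻¹ * ‖c‖ * Real.sqrt ‖ω i‖ := by
            have := mul_le_mul_of_nonneg_right hn1 hcpos.le
            exact mul_le_mul_of_nonneg_right this hp.le
        _ = ‖c‖ := by field_simp
  choose w hw1 hw2 using hwex
  set s : ℕ → ℕ := chooseSeq α μ hsmall hpos with hs
  -- the element v not in the range
  have hvmem : (fun i => if ∃ k, s k = i then (μ - α i) * w i else 0) ∈ Eomega K ω := by
    rw [Eomega.mem_iff, Metric.tendsto_atTop]
    intro ε hε
    obtain ⟨k0, hk0⟩ := exists_nat_gt (‖c‖/ε)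
    refine ⟨(Finset.image s (Finset.range k0)).sup id + 1, fun i hi => ?_⟩
    rw [Real.dist_eq, sub_zero, abs_of_nonneg (by positivity)]
    by_cases hex : ∃ k, s k = i
    · obtain ⟨k, rfl⟩ := hex
      have hk : k0 ≤ k := by
        by_contra hlt
        push_neg at hlt
        have h1 : s k ∈ Finset.image s (Finset.range k0) :=
          Finset.mem_image_of_mem s (Finset.mem_range.2 hlt)
        have h2 := Finset.le_sup (f := id) h1
        simp only [id] at h2
        omega
      have hk0' : (0:ℝ) < (k0:ℝ)+1 := by positivity
      rw [if_pos ⟨k, rfl⟩]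
      calc ‖(μ - α (s k)) * w (s k)‖ * Real.sqrt ‖ω (s k)‖
          = ‖μ - α (s k)‖ * (‖w (s k)‖ * Real.sqrt ‖ω (s k)‖) := by
            rw [norm_mul]; ring
        _ ≤ ‖μ - α (s k)‖ * ‖c‖ :=
            mul_le_mul_of_nonneg_left (hw2 _) (norm_nonneg _)
        _ < (1/((k:ℝ)+1)) * ‖c‖ :=
            mul_lt_mul_of_pos_right (chooseSeq_lt α μ hsmall hpos k) hcpos
        _ ≤ (1/((k0:ℝ)+1)) * ‖c‖ := by
            have : (1:ℝ)/((k:ℝ)+1) ≤ 1/((k0:ℝ)+1) := by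
              apply one_div_le_one_div_of_le hk0'
              exact_mod_cast Nat.succ_le_succ hk
            exact mul_le_mul_of_nonneg_right this hcpos.le
        _ = ‖c‖/((k0:ℝ)+1) := by ring
        _ < ε := by
            rw [div_lt_iff₀ hk0']
            rw [div_lt_iff₀ hε] at hk0
            nlinarith
    · rw [if_neg hex]
      simpa using hε
  obtain ⟨u, hu⟩ := hsurj ⟨_, hvmem⟩
  have hcoord : ∀ k, (u : ℕ → K) (s k) = w (s k) := by
    intro k
    have h := congrArg (fun z : Eomega K ω => (z : ℕ → K) (s k)) hu
    simp only at h
    rw [Tapply] at h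
    rw [if_pos ⟨k, rfl⟩] at h
    exact mul_left_cancel₀ (sub_ne_zero.2 (hempty _).symm) h
  have hs_tend : Tendsto s atTop atTop := by
    have h := (chooseSeq_injective α μ hsmall hpos).tendsto_cofinite
    rwa [Nat.cofinite_eq_atTop] at h
  have htend : Tendsto (fun k => ‖(u : ℕ → K) (s k)‖ * Real.sqrt ‖ω (s k)‖)
      atTop (𝓝 0) := (Eomega.mem_iff.1 u.2).comp hs_tend
  have hev : ∀ᶠ k in atTop,
      ‖(u : ℕ → K) (s k)‖ * Real.sqrt ‖ω (s k)‖ < 1 :=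
    htend.eventually_lt_const zero_lt_one
  obtain ⟨k, hk⟩ := hev.exists
  rw [hcoord k] at hk
  exact absurd (hw1 (s k)) (not_le.2 hk)

end Aux8
section Aux9
variable {K : Type*} [NontriviallyNormedField K] {ω : ℕ → K}

lemma caseB_fredholm (hω : ∀ i, ω i ≠ 0) (α : ℕ → K)
    (hα : ∃ C, ∀ i, ‖α i‖ ≤ C) (μ : K)
    (hfin : {i : ℕ | α i = μ}.Finite)
    {ε : ℝ} (hε : 0 < ε) (hsep : ∀ i : ℕ, α i ≠ μ → ε ≤ ‖μ - α i‖) :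
    IsFredholm0 (μ • (LinearMap.id : Eomega K ω →ₗ[K] Eomega K ω) - diagOp ω α hα) := by
  classical
  set T := μ • (LinearMap.id : Eomega K ω →ₗ[K] Eomega K ω) - diagOp ω α hα with hT
  set s : Finset ℕ := hfin.toFinset with hsdef
  have hmem_s : ∀ i : ℕ, i ∈ s ↔ α i = μ := fun i => hfin.mem_toFinset
  -- the coordinate-restriction map
  have hTap : ∀ (u : Eomega K ω) (i : ℕ),
      ((T u : Eomega K ω) : ℕ → K) i = (μ - α i) * (u : ℕ → K) i := by
    intro u i
    rw [hT]
    exact Tapply α hα μ u i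
  set Φ : Eomega K ω →ₗ[K] (s → K) :=
    { toFun := fun v j => (v : ℕ → K) j.val
      map_add' := fun u v => rfl
      map_smul' := fun c v => rfl } with hΦ
  -- elements supported on s
  have hofs : ∀ f : s → K, ∃ u : Eomega K ω,
      (∀ j : s, (u : ℕ → K) j.val = f j) ∧ (∀ i ∉ s, (u : ℕ → K) i = 0) := by
    intro f
    refine ⟨⟨fun i => if h : i ∈ s then f ⟨i, h⟩ else 0,
      Eomega.mem_of_finsupp s _ (fun i hi => dif_neg hi)⟩, fun j => ?_, fun i hi => dif_neg hi⟩
    simp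
  have hΦsurj : Function.Surjective Φ := by
    intro f
    obtain ⟨u, hu1, _⟩ := hofs f
    exact ⟨u, funext fun j => hu1 j⟩
  have hkerΦ : LinearMap.ker Φ = LinearMap.range T := by
    ext v
    simp only [LinearMap.mem_ker, LinearMap.mem_range]
    constructor
    · intro hv
      have hv' : ∀ j : s, (v : ℕ → K) j.val = 0 := fun j => congrFun hv j
      have hmem : (fun i => if i ∈ s then 0 else (μ - α i)⁻¹ * (v : ℕ → K) i)
          ∈ Eomega K ω := by
        rw [Eomega.mem_iff]
        have h := (Eomega.mem_iff.1 v.2).const_mul ε⁻¹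
        rw [mul_zero] at h
        refine squeeze_zero (fun i => by positivity) (fun i => ?_) h
        by_cases hi : i ∈ s
        · simp [hi]
          positivity
        · rw [if_neg hi]
          have hne : α i ≠ μ := fun h' => hi ((hmem_s i).2 h')
          have hb : ‖(μ - α i)⁻¹‖ ≤ ε⁻¹ := by
            rw [norm_inv]
            exact inv_anti₀ hε (hsep i hne)
          calc ‖(μ - α i)⁻¹ * (v : ℕ → K) i‖ * Real.sqrt ‖ω i‖
              = ‖(μ - α i)⁻¹‖ * (‖(v : ℕ → K) i‖ * Real.sqrt ‖ω i‖) := by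
                rw [norm_mul]; ring
            _ ≤ ε⁻¹ * (‖(v : ℕ → K) i‖ * Real.sqrt ‖ω i‖) :=
                mul_le_mul_of_nonneg_right hb (by positivity)
      refine ⟨⟨_, hmem⟩, ?_⟩
      apply Subtype.ext
      funext i
      rw [hTap]
      show (μ - α i) * (if i ∈ s then 0 else (μ - α i)⁻¹ * (v : ℕ → K) i)
          = (v : ℕ → K) i
      by_cases hi : i ∈ s
      · rw [if_pos hi, mul_zero]
        exact (hv' ⟨i, hi⟩).symm
      · have hne : α i ≠ μ := fun h' => hi ((hmem_s i).2 h')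
        rw [if_neg hi]
        exact mul_inv_cancel_left₀ (sub_ne_zero.2 hne.symm) _
    · rintro ⟨u, rfl⟩
      funext j
      have : α j.val = μ := (hmem_s j.val).1 j.2
      show ((T u : Eomega K ω) : ℕ → K) j.val = 0
      rw [hTap, this]
      simp
  -- kernel equivalence
  set Ψ : LinearMap.ker T →ₗ[K] (s → K) :=
    { toFun := fun u j => ((u : Eomega K ω) : ℕ → K) j.val
      map_add' := fun u v => rfl
      map_smul' := fun c v => rfl } with hΨ
  have hΨbij : Function.Bijective Ψ := by
    constructor
    · intro u v huv
      apply Subtype.ext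
      apply Subtype.ext
      funext i
      by_cases hi : i ∈ s
      · exact congrFun huv ⟨i, hi⟩
      · have hne : α i ≠ μ := fun h' => hi ((hmem_s i).2 h')
        have hu0 : (μ - α i) * ((u : Eomega K ω) : ℕ → K) i = 0 := by
          rw [← hTap, LinearMap.mem_ker.1 u.2]
          rfl
        have hv0 : (μ - α i) * ((v : Eomega K ω) : ℕ → K) i = 0 := by
          rw [← hTap, LinearMap.mem_ker.1 v.2]
          rfl
        have hne' : μ - α i ≠ 0 := sub_ne_zero.2 hne.symm
        have h1 := (mul_eq_zero.1 hu0).resolve_left hne'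
        have h2 := (mul_eq_zero.1 hv0).resolve_left hne'
        rw [h1, h2]
    · intro f
      obtain ⟨u, hu1, hu2⟩ := hofs f
      have humem : u ∈ LinearMap.ker T := by
        rw [LinearMap.mem_ker]
        apply Subtype.ext
        funext i
        rw [hTap]
        by_cases hi : i ∈ s
        · have : α i = μ := (hmem_s i).1 hi
          rw [this]
          simp
        · rw [hu2 i hi, mul_zero]
          rfl
      exact ⟨⟨u, humem⟩, funext fun j => hu1 j⟩
  have eker : (LinearMap.ker T) ≃ₗ[K] (s → K) := LinearEquiv.ofBijective Ψ hΨbij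
  have equot : (Eomega K ω ⧸ LinearMap.range T) ≃ₗ[K] (s → K) :=
    (Submodule.quotEquivOfEq _ _ hkerΦ.symm).trans
      (Φ.quotKerEquivOfSurjective hΦsurj)
  haveI hfd1 : FiniteDimensional K (LinearMap.ker T) :=
    Module.Finite.equiv eker.symm
  haveI hfd2 : FiniteDimensional K (Eomega K ω ⧸ LinearMap.range T) :=
    Module.Finite.equiv equot.symm
  refine ⟨hfd1, ?_, hfd2, ?_⟩
  · -- range is closed
    have hset : (LinearMap.range T : Set (Eomega K ω))
        = ⋂ j : s, (Eomega.evalLM ω j.val) ⁻¹' {0} := by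
      ext v
      simp only [Set.mem_iInter, Set.mem_preimage, Set.mem_singleton_iff,
        Eomega.evalLM_apply, SetLike.mem_coe]
      rw [← hkerΦ, LinearMap.mem_ker]
      constructor
      · intro hv j
        exact congrFun hv j
      · intro hv
        funext j
        exact hv j
    rw [hset]
    exact isClosed_iInter fun j =>
      IsClosed.preimage (Eomega.continuous_evalLM hω j.val) isClosed_singleton
  · rw [eker.finrank_eq, equot.finrank_eq]

lemma caseB_not_injective (α : ℕ → K) (hα : ∃ C, ∀ i, ‖α i‖ ≤ C) (μ : K)
    (hne : {i : ℕ | α i = μ}.Nonempty) :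
    ¬ Function.Injective
      ⇑(μ • (LinearMap.id : Eomega K ω →ₗ[K] Eomega K ω) - diagOp ω α hα) := by
  obtain ⟨j, hj⟩ := hne
  intro hinj
  have h0 : Eomega.sgl ω j (1:K) = 0 := by
    apply hinj
    rw [map_zero]
    exact LinearMap.mem_ker.1 (sgl_mem_ker α hα μ j hj 1)
  have := congrArg (fun z : Eomega K ω => (z : ℕ → K) j) h0
  simp at this

end Aux9
section Aux10
variable {K : Type*} [NontriviallyNormedField K] {ω : ℕ → K}

lemma inj_of_empty (α : ℕ → K) (hα : ∃ C, ∀ i, ‖α i‖ ≤ C) (μ : K)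
    (hempty : ∀ i : ℕ, α i ≠ μ) :
    Function.Injective
      ⇑(μ • (LinearMap.id : Eomega K ω →ₗ[K] Eomega K ω) - diagOp ω α hα) := by
  apply LinearMap.ker_eq_bot.1
  rw [eq_bot_iff]
  intro u hu
  rw [Submodule.mem_bot]
  apply Subtype.ext
  funext i
  have h : (((μ • (LinearMap.id : Eomega K ω →ₗ[K] Eomega K ω) - diagOp ω α hα) u
      : Eomega K ω) : ℕ → K) i = 0 := by
    rw [LinearMap.mem_ker.1 hu]; rfl
  rw [Tapply] at h
  have := (mul_eq_zero.1 h).resolve_left (sub_ne_zero.2 (hempty i).symm)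
  simpa using this

end Aux10

/-- If every value of `α` attained only finitely often is
isolated from the other diagonal entries, the essential spectrum of `D`
decomposes as `σ_e(D) = σ'_e(D) ∪ σ''_e(D)`. -/
theorem stmt11 {K : Type*} [NontriviallyNormedField K] [CompleteSpace K]
    (hna : ∀ x y : K, ‖x + y‖ ≤ max ‖x‖ ‖y‖)
    (ω : ℕ → K) (hω : ∀ i, ω i ≠ 0)
    (α : ℕ → K) (hα : ∃ C, ∀ i, ‖α i‖ ≤ C)
    (hisol : ∀ μ : K, {i : ℕ | α i = μ}.Nonempty → {i : ℕ | α i = μ}.Finite →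
      ∃ ε > 0, ∀ i : ℕ, α i ≠ μ → ε ≤ ‖μ - α i‖) :
    essSpec (diagOp ω α hα) =
      properEssSpec (diagOp ω α hα) ∪ improperEssSpec (diagOp ω α hα) := by
  ext μ
  simp only [essSpec, properEssSpec, improperEssSpec, specSet, Set.mem_union,
    Set.mem_setOf_eq]
  by_cases hinf : {i : ℕ | α i = μ}.Infinite
  · have hk := caseA_ker_infinite (ω := ω) α hα μ hinf
    exact ⟨fun _ => Or.inr hk, fun _ hF => hk hF.1⟩
  · have hfin : {i : ℕ | α i = μ}.Finite := Set.not_infinite.mp hinf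
    by_cases hne : {i : ℕ | α i = μ}.Nonempty
    · obtain ⟨ε, hε, hsep⟩ := hisol μ hne hfin
      have hF := caseB_fredholm hω α hα μ hfin hε hsep
      have hni := caseB_not_injective (ω := ω) α hα μ hne
      refine ⟨fun h => absurd hF h, ?_⟩
      rintro (⟨_, hinj, _⟩ | himp)
      · exact absurd hinj hni
      · exact absurd hF.1 himp
    · have hempty : ∀ i, α i ≠ μ := fun i h => hne ⟨i, h⟩
      have hinj := inj_of_empty (ω := ω) α hα μ hempty
      by_cases hbdd : ∃ δ : ℝ, 0 < δ ∧ ∀ i, δ ≤ ‖μ - α i‖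
      · obtain ⟨δ, hδ, hb⟩ := hbdd
        obtain ⟨S, hScont, hSl, hSr⟩ := caseC_inverse (ω := ω) α hα μ hδ hb
        have hSurj : Function.Surjective
            ⇑(μ • (LinearMap.id : Eomega K ω →ₗ[K] Eomega K ω) - diagOp ω α hα) :=
          fun v => ⟨S v, by rw [← LinearMap.comp_apply, hSr]; rfl⟩
        have hF := fredholm0_of_bijective _ hinj hSurj
        refine ⟨fun h => absurd hF h, ?_⟩
        rintro (⟨_, _, hnsurj⟩ | himp)
        · exact absurd hSurj hnsurj
        · exact absurd hF.1 himp
      · push_neg at hbdd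
        have hsmall : ∀ δ : ℝ, 0 < δ → ∃ i, ‖μ - α i‖ < δ := fun δ hδ => hbdd δ hδ
        have hnsurj := caseD_not_surjective hω α hα μ hempty hsmall
        have hspec : ¬ ∃ S : Eomega K ω →ₗ[K] Eomega K ω, Continuous S ∧
            S ∘ₗ (μ • LinearMap.id - diagOp ω α hα) = LinearMap.id ∧
            (μ • LinearMap.id - diagOp ω α hα) ∘ₗ S = LinearMap.id := by
          rintro ⟨S, _, _, hSr⟩
          exact hnsurj fun v => ⟨S v, by rw [← LinearMap.comp_apply, hSr]; rfl⟩
        refine ⟨fun _ => Or.inl ⟨hspec, hinj, hnsurj⟩, fun _ hF => ?_⟩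
        exact hnsurj (surj_of_fredholm0_inj _ hF hinj)
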